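/- There exists a constant C > 0 such that for all reals q with 0 < q < 1/2: ∑_{n=1}^{∞} q(1−q)^{n−1} · (ln n + 1)/((q/2)(1 − q/2)^n) ≤ C · q^{−1} · ln(1/q); in particular the series converges. -/

import Mathlib

/-- Geometric-distribution case of Theorem 3.8: the `Geo(q)`-average
`∑_{n=1}^∞ q(1−q)^{n−1} (ln n + 1)/((q/2)(1 − q/2)^n)` converges and is
`O(q⁻¹ log q⁻¹)`. (The sum over `n ≥ 1` is written with the index shift `n = m + 1`.) -/
theorem stmt5 :
    ∃ C : ℝ, 0 < C ∧ ∀ q : ℝ, 0 < q → q < 1 / 2 →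
      Summable (fun m : ℕ =>
        q * (1 - q) ^ m * (Real.log (m + 1) + 1) / ((q / 2) * (1 - q / 2) ^ (m + 1))) ∧
      (∑' m : ℕ,
        q * (1 - q) ^ m * (Real.log (m + 1) + 1) / ((q / 2) * (1 - q / 2) ^ (m + 1)))
        ≤ C * q⁻¹ * Real.log (1 / q) := by
  refine ⟨64, by norm_num, fun q hq hq2 => ?_⟩
  have h2 : (0:ℝ) < 1 - q / 2 := by linarith
  have h1 : (0:ℝ) < 1 - q := by linarith
  set r : ℝ := (1 - q) / (1 - q / 2) with hr_def
  have hr0 : 0 < r := div_pos h1 h2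
  have hr1 : r < 1 := by rw [hr_def, div_lt_one h2]; linarith
  have h1r_pos : 0 < 1 - r := by linarith
  have h1req : 1 - r = (q / 2) / (1 - q / 2) := by
    rw [hr_def, one_sub_div h2.ne']
    congr 1
    ring
  have h1r_ge : q / 2 ≤ 1 - r := by
    rw [h1req, le_div_iff₀ h2]; nlinarith
  set A : ℝ := 2 / (1 - q / 2) with hA_def
  have hA0 : 0 < A := by positivity
  have hA : A ≤ 8 / 3 := by
    rw [hA_def, div_le_iff₀ h2]; nlinarith
  set L : ℝ := Real.log ((1 - r)⁻¹) with hL_def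
  have hL0 : 0 ≤ L := by
    rw [hL_def]
    apply Real.log_nonneg
    exact (one_le_inv₀ h1r_pos).2 (by linarith)
  -- pointwise equality
  have hfeq : ∀ m : ℕ, q * (1 - q) ^ m * (Real.log (m + 1) + 1) / ((q / 2) * (1 - q / 2) ^ (m + 1))
      = A * ((Real.log (m + 1) + 1) * r ^ m) := by
    intro m
    have h2m : (0:ℝ) < (1 - q / 2) ^ m := pow_pos h2 m
    rw [hA_def, hr_def, div_pow, pow_succ, mul_div_assoc', div_mul_div_comm,
      div_eq_div_iff (by positivity) (by positivity)]
    ring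
  -- pointwise log bound
  have hlog : ∀ m : ℕ, Real.log (m + 1) + 1 ≤ (1 - r) * (m + 1) + L := by
    intro m
    have hx : (0:ℝ) < (1 - r) * ((m:ℝ) + 1) := by positivity
    have h := Real.log_le_sub_one_of_pos hx
    rw [Real.log_mul h1r_pos.ne' (by positivity)] at h
    rw [hL_def, Real.log_inv]
    linarith
  -- summability pieces
  have hrnorm : ‖r‖ < 1 := by rwa [Real.norm_eq_abs, abs_of_pos hr0]
  have s0 : Summable (fun m : ℕ => r ^ m) := summable_geometric_of_lt_one hr0.le hr1
  have s1 : Summable (fun m : ℕ => (m : ℝ) * r ^ m) := by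
    simpa using summable_pow_mul_geometric_of_norm_lt_one 1 hrnorm
  have s2 : Summable (fun m : ℕ => ((m : ℝ) + 1) * r ^ m) := by
    simpa [add_mul] using s1.add s0
  have sg : Summable (fun m : ℕ => A * (1 - r) * (((m : ℝ) + 1) * r ^ m) + A * L * r ^ m) :=
    (s2.mul_left _).add (s0.mul_left _)
  have hfg : ∀ m : ℕ, q * (1 - q) ^ m * (Real.log (m + 1) + 1) / ((q / 2) * (1 - q / 2) ^ (m + 1))
      ≤ A * (1 - r) * (((m : ℝ) + 1) * r ^ m) + A * L * r ^ m := by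
    intro m
    rw [hfeq m]
    have hb := mul_le_mul_of_nonneg_right (hlog m) (pow_nonneg hr0.le m)
    nlinarith [hA0.le]
  have hfnn : ∀ m : ℕ, 0 ≤ q * (1 - q) ^ m * (Real.log (m + 1) + 1) / ((q / 2) * (1 - q / 2) ^ (m + 1)) := by
    intro m
    have hlognn : 0 ≤ Real.log (m + 1) := Real.log_nonneg (by push_cast; linarith [Nat.cast_nonneg (α := ℝ) m])
    positivity
  have sf : Summable (fun m : ℕ =>
      q * (1 - q) ^ m * (Real.log (m + 1) + 1) / ((q / 2) * (1 - q / 2) ^ (m + 1))) :=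
    Summable.of_nonneg_of_le hfnn hfg sg
  refine ⟨sf, ?_⟩
  have ht : (∑' m : ℕ, q * (1 - q) ^ m * (Real.log (m + 1) + 1) / ((q / 2) * (1 - q / 2) ^ (m + 1)))
      ≤ ∑' m : ℕ, (A * (1 - r) * (((m : ℝ) + 1) * r ^ m) + A * L * r ^ m) :=
    Summable.tsum_le_tsum hfg sf sg
  have t0 : ∑' m : ℕ, r ^ m = (1 - r)⁻¹ := tsum_geometric_of_lt_one hr0.le hr1
  have t1 : ∑' m : ℕ, (m : ℝ) * r ^ m = r / (1 - r) ^ 2 :=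
    tsum_coe_mul_geometric_of_norm_lt_one hrnorm
  have t2 : ∑' m : ℕ, ((m : ℝ) + 1) * r ^ m = r / (1 - r) ^ 2 + (1 - r)⁻¹ := by
    rw [← t1, ← t0, ← Summable.tsum_add s1 s0]
    congr 1; ext m; ring
  have tg : ∑' m : ℕ, (A * (1 - r) * (((m : ℝ) + 1) * r ^ m) + A * L * r ^ m)
      = A * (1 + L) / (1 - r) := by
    rw [Summable.tsum_add (s2.mul_left _) (s0.mul_left _), tsum_mul_left, tsum_mul_left, t2, t0]
    field_simp
    ring
  rw [tg] at ht
  -- final estimates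
  set Lq : ℝ := Real.log (1 / q) with hLq_def
  have hLq2 : Real.log 2 ≤ Lq := by
    rw [hLq_def]
    apply Real.log_le_log two_pos
    rw [le_div_iff₀ hq]; linarith
  have hlog2 : (0.6931471803 : ℝ) < Real.log 2 := Real.log_two_gt_d9
  have hL_le : L ≤ Real.log 2 + Lq := by
    rw [hL_def, hLq_def]
    have h1 : (1 - r)⁻¹ ≤ (q / 2)⁻¹ := by
      apply inv_anti₀ (by positivity) h1r_ge
    calc Real.log (1 - r)⁻¹ ≤ Real.log ((q / 2)⁻¹) := Real.log_le_log (by positivity) h1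
      _ = Real.log 2 + Real.log (1 / q) := by
          rw [← Real.log_mul two_ne_zero (by positivity : (1:ℝ)/q ≠ 0)]
          congr 1
          rw [inv_div]; ring
  have hinv : (1 - r)⁻¹ ≤ 2 * q⁻¹ := by
    have h1 : (1 - r)⁻¹ ≤ (q / 2)⁻¹ := inv_anti₀ (by positivity) h1r_ge
    calc (1 - r)⁻¹ ≤ (q / 2)⁻¹ := h1
      _ = 2 * q⁻¹ := by rw [inv_div]; ring
  have h1L : 1 + L ≤ 4 * Lq := by linarith
  have hLq0 : 0 < Lq := by linarith
  refine ht.trans ?_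
  calc A * (1 + L) / (1 - r) = A * (1 + L) * (1 - r)⁻¹ := by rw [div_eq_mul_inv]
    _ ≤ (8 / 3) * (4 * Lq) * (2 * q⁻¹) := by
        apply mul_le_mul (mul_le_mul hA h1L (by linarith) (by norm_num)) hinv
          (by positivity) (by positivity)
    _ ≤ 64 * q⁻¹ * Lq := by
        have : (0:ℝ) < q⁻¹ := by positivity
        nlinarith
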